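/- Let k ≥ 1 and n = 2k + 1, and let B ⊆ ℤ^n be the subgroup generated by the 2k vectors 2(e_{2i−1} − e_{2i}) and 2(e_{2i−1} + e_{2i}) for 1 ≤ i ≤ k. Then a vector x ∈ ℤ^n belongs to B if and only if x_{2k+1} = 0 and, for every 1 ≤ i ≤ k, x_{2i−1} ≡ 0 (mod 2) and x_{2i−1} + x_{2i} ≡ 0 (mod 4). -/

import Mathlib

/-- The kernel computation: for `n = 2k+1`, the subgroup `B ⊆ ℤ^n` generated by
`2(e_{2i−1} − e_{2i})` and `2(e_{2i−1} + e_{2i})` (1-based; here 0-based indices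
`2i` and `2i+1`) consists exactly of the vectors whose last coordinate vanishes,
whose odd coordinates are even, and the sums of whose consecutive pairs are
divisible by 4. -/
theorem stmt_4 (k : ℕ) (hk : 1 ≤ k)
    (B : AddSubgroup (Fin (2 * k + 1) → ℤ))
    (hB : B = AddSubgroup.closure
      ((Set.range fun i : Fin k =>
          (2 : ℤ) • (Pi.single (⟨2 * (i : ℕ), by have := i.isLt; omega⟩ : Fin (2 * k + 1)) (1 : ℤ)
            - Pi.single (⟨2 * (i : ℕ) + 1, by have := i.isLt; omega⟩ : Fin (2 * k + 1)) (1 : ℤ))) ∪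
        (Set.range fun i : Fin k =>
          (2 : ℤ) • (Pi.single (⟨2 * (i : ℕ), by have := i.isLt; omega⟩ : Fin (2 * k + 1)) (1 : ℤ)
            + Pi.single (⟨2 * (i : ℕ) + 1, by have := i.isLt; omega⟩ : Fin (2 * k + 1)) (1 : ℤ)))))
    (x : Fin (2 * k + 1) → ℤ) :
    x ∈ B ↔
      (x ⟨2 * k, by omega⟩ = 0 ∧
        ∀ i : Fin k,
          (2 : ℤ) ∣ x ⟨2 * (i : ℕ), by have := i.isLt; omega⟩ ∧
          (4 : ℤ) ∣ (x ⟨2 * (i : ℕ), by have := i.isLt; omega⟩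
            + x ⟨2 * (i : ℕ) + 1, by have := i.isLt; omega⟩)) := by
  subst hB
  constructor
  · intro hx
    induction hx using AddSubgroup.closure_induction with
    | mem y hy =>
      rcases hy with ⟨i, rfl⟩ | ⟨i, rfl⟩ <;>
      refine ⟨?_, fun j => ⟨?_, ?_⟩⟩ <;>
      · have hi := i.isLt
        simp only [Pi.smul_apply, Pi.sub_apply, Pi.add_apply, Pi.single_apply,
          Fin.mk.injEq, smul_eq_mul]
        split_ifs <;> omega
    | zero => exact ⟨rfl, fun j => ⟨dvd_zero _, dvd_zero _⟩⟩
    | add a b _ _ ha hb =>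
      refine ⟨?_, fun j => ?_⟩
      · simp only [Pi.add_apply, ha.1, hb.1, add_zero]
      · obtain ⟨h1, h2⟩ := ha.2 j
        obtain ⟨h3, h4⟩ := hb.2 j
        simp only [Pi.add_apply]
        omega
    | neg a _ ha =>
      refine ⟨by simp only [Pi.neg_apply, ha.1, neg_zero], fun j => ?_⟩
      obtain ⟨h1, h2⟩ := ha.2 j
      simp only [Pi.neg_apply]
      omega
  · intro hcond
    have key : x = ∑ i : Fin k,
        (((x ⟨2 * (i : ℕ), by have := i.isLt; omega⟩ - x ⟨2 * (i : ℕ) + 1, by have := i.isLt; omega⟩) / 4) •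
          ((2 : ℤ) • (Pi.single (⟨2 * (i : ℕ), by have := i.isLt; omega⟩ : Fin (2 * k + 1)) (1 : ℤ)
            - Pi.single (⟨2 * (i : ℕ) + 1, by have := i.isLt; omega⟩ : Fin (2 * k + 1)) (1 : ℤ)))
        + ((x ⟨2 * (i : ℕ), by have := i.isLt; omega⟩ + x ⟨2 * (i : ℕ) + 1, by have := i.isLt; omega⟩) / 4) •
          ((2 : ℤ) • (Pi.single (⟨2 * (i : ℕ), by have := i.isLt; omega⟩ : Fin (2 * k + 1)) (1 : ℤ)
            + Pi.single (⟨2 * (i : ℕ) + 1, by have := i.isLt; omega⟩ : Fin (2 * k + 1)) (1 : ℤ)))) := by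
      funext j
      rw [Finset.sum_apply]
      have hj := j.isLt
      rcases Nat.lt_or_ge (j : ℕ) (2 * k) with hlt | hge
      · have pj2 : (j : ℕ) / 2 < k := by omega
        rcases Nat.even_or_odd (j : ℕ) with ⟨m, hm⟩ | ⟨m, hm⟩
        · have hj1 : j = ⟨2 * ((j : ℕ) / 2), by omega⟩ :=
            Fin.ext (show (j : ℕ) = 2 * ((j : ℕ) / 2) by omega)
          have hj2 : j ≠ ⟨2 * ((j : ℕ) / 2) + 1, by omega⟩ :=
            Fin.ne_of_val_ne (show (j : ℕ) ≠ 2 * ((j : ℕ) / 2) + 1 by omega)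
          rw [Fintype.sum_eq_single (⟨(j : ℕ) / 2, pj2⟩ : Fin k)]
          · simp only [Pi.add_apply, Pi.smul_apply, Pi.sub_apply, Pi.single_apply,
              smul_eq_mul, Fin.val_mk]
            rw [if_pos hj1, if_neg hj2, congrArg x hj1]
            obtain ⟨h1, h2⟩ := hcond.2 ⟨(j : ℕ) / 2, pj2⟩
            simp only [Fin.val_mk] at h1 h2
            omega
          · intro i hne
            have hi := i.isLt
            have hi0 : (i : ℕ) ≠ (j : ℕ) / 2 := fun h => hne (Fin.ext (by simpa using h))
            simp only [Pi.add_apply, Pi.smul_apply, Pi.sub_apply, Pi.single_apply,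
              smul_eq_mul, Fin.ext_iff, Fin.val_mk]
            split_ifs <;> first | omega | ring
        · have hj1 : j ≠ ⟨2 * ((j : ℕ) / 2), by omega⟩ :=
            Fin.ne_of_val_ne (show (j : ℕ) ≠ 2 * ((j : ℕ) / 2) by omega)
          have hj2 : j = ⟨2 * ((j : ℕ) / 2) + 1, by omega⟩ :=
            Fin.ext (show (j : ℕ) = 2 * ((j : ℕ) / 2) + 1 by omega)
          rw [Fintype.sum_eq_single (⟨(j : ℕ) / 2, pj2⟩ : Fin k)]
          · simp only [Pi.add_apply, Pi.smul_apply, Pi.sub_apply, Pi.single_apply,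
              smul_eq_mul, Fin.val_mk]
            rw [if_neg hj1, if_pos hj2, congrArg x hj2]
            obtain ⟨h1, h2⟩ := hcond.2 ⟨(j : ℕ) / 2, pj2⟩
            simp only [Fin.val_mk] at h1 h2
            omega
          · intro i hne
            have hi := i.isLt
            have hi0 : (i : ℕ) ≠ (j : ℕ) / 2 := fun h => hne (Fin.ext (by simpa using h))
            simp only [Pi.add_apply, Pi.smul_apply, Pi.sub_apply, Pi.single_apply,
              smul_eq_mul, Fin.ext_iff, Fin.val_mk]
            split_ifs <;> first | omega | ring
      · rw [show j = ⟨2 * k, by omega⟩ from Fin.ext (by simp only [Fin.val_mk]; omega),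
          hcond.1]
        refine (Finset.sum_eq_zero fun i _ => ?_).symm
        have hi := i.isLt
        simp only [Pi.add_apply, Pi.smul_apply, Pi.sub_apply, Pi.single_apply,
          smul_eq_mul, Fin.mk.injEq, Fin.val_mk]
        split_ifs <;> first | omega | ring
    rw [key]
    refine sum_mem fun i _ => add_mem (zsmul_mem (AddSubgroup.subset_closure ?_) _)
      (zsmul_mem (AddSubgroup.subset_closure ?_) _)
    · exact Or.inl ⟨i, rfl⟩
    · exact Or.inr ⟨i, rfl⟩
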